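/- Let μ ≥ 2 be an integer, let b, c ∈ ℂ with b ≠ 0 and c ≠ 0, let r > 0, and let f₁, f₂, g₁, g₂ be holomorphic on the ball B(0, r) ⊆ ℂ with f₁(0) = f₂(0) = g₁(0) = g₂(0) = 1. Define A(z) = f₂(z), B(z) = b·z^{2μ−1}·g₂(z), C(z) = c·z^{−1}·f₁(z), D(z) = g₁(z), and h(z) = z²·(A(z)·C′(z) − C(z)·A′(z)). Suppose A(z)·D(z) − B(z)·C(z) = 1 for all z ∈ B(0, r) with z ≠ 0. Then the residue at 0 of the one-form D dC − C dD equals −h′(0), where h is extended holomorphically to 0. -/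

import Mathlib

open Complex

/-- For the canonical Bryant representation of a canonical horospherical end,
with `h(z) = z²(A C′ − C A′)` extended holomorphically to `0`, the residue at `0`
of the one-form `D dC − C dD` equals `−h′(0)` (this expresses `φ₀ = −4π h′(0)`). -/
theorem stmt15 (μ : ℕ) (hμ : 2 ≤ μ) (b c : ℂ) (hb : b ≠ 0) (hc : c ≠ 0)
    (r : ℝ) (hr : 0 < r) (f₁ f₂ g₁ g₂ : ℂ → ℂ)
    (hf₁ : DifferentiableOn ℂ f₁ (Metric.ball 0 r))
    (hf₂ : DifferentiableOn ℂ f₂ (Metric.ball 0 r))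
    (hg₁ : DifferentiableOn ℂ g₁ (Metric.ball 0 r))
    (hg₂ : DifferentiableOn ℂ g₂ (Metric.ball 0 r))
    (hf₁0 : f₁ 0 = 1) (hf₂0 : f₂ 0 = 1) (hg₁0 : g₁ 0 = 1) (hg₂0 : g₂ 0 = 1)
    (A B C D : ℂ → ℂ)
    (hA : ∀ z, A z = f₂ z)
    (hB : ∀ z, B z = b * z ^ (2 * μ - 1) * g₂ z)
    (hC : ∀ z, C z = c * z⁻¹ * f₁ z)
    (hD : ∀ z, D z = g₁ z)
    (hdet : ∀ z ∈ Metric.ball (0 : ℂ) r, z ≠ 0 → A z * D z - B z * C z = 1)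
    (H : ℂ → ℂ)
    (hHdiff : DifferentiableOn ℂ H (Metric.ball 0 r))
    (hH : ∀ z ∈ Metric.ball (0 : ℂ) r, z ≠ 0 →
      H z = z ^ 2 * (A z * deriv C z - C z * deriv A z)) :
    ∀ R : ℝ, 0 < R → R < r →
      (∮ z in C(0, R), (D z * deriv C z - C z * deriv D z)) =
        2 * Real.pi * Complex.I * (-(deriv H 0)) := by
  intro R hR hRr
  have hob : IsOpen (Metric.ball (0:ℂ) r) := Metric.isOpen_ball
  have h0r : (0:ℂ) ∈ Metric.ball (0:ℂ) r := by simpa using hr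
  -- function equalities
  have hAe : A = f₂ := funext hA
  have hDe : D = g₁ := funext hD
  have hCe : C = fun z => c * z⁻¹ * f₁ z := funext hC
  -- derivatives are differentiable (analyticity)
  have hf₁' : DifferentiableOn ℂ (deriv f₁) (Metric.ball 0 r) :=
    ((hf₁.analyticOnNhd hob).deriv).differentiableOn
  have hf₂' : DifferentiableOn ℂ (deriv f₂) (Metric.ball 0 r) :=
    ((hf₂.analyticOnNhd hob).deriv).differentiableOn
  have hg₁' : DifferentiableOn ℂ (deriv g₁) (Metric.ball 0 r) :=
    ((hg₁.analyticOnNhd hob).deriv).differentiableOn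
  -- differentiability at points of the ball
  have hf₁at : ∀ z ∈ Metric.ball (0:ℂ) r, HasDerivAt f₁ (deriv f₁ z) z := fun z hz =>
    (hf₁.differentiableAt (hob.mem_nhds hz)).hasDerivAt
  have hf₂at : ∀ z ∈ Metric.ball (0:ℂ) r, HasDerivAt f₂ (deriv f₂ z) z := fun z hz =>
    (hf₂.differentiableAt (hob.mem_nhds hz)).hasDerivAt
  have hg₁at : ∀ z ∈ Metric.ball (0:ℂ) r, HasDerivAt g₁ (deriv g₁ z) z := fun z hz =>
    (hg₁.differentiableAt (hob.mem_nhds hz)).hasDerivAt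
  have hg₂at : ∀ z ∈ Metric.ball (0:ℂ) r, HasDerivAt g₂ (deriv g₂ z) z := fun z hz =>
    (hg₂.differentiableAt (hob.mem_nhds hz)).hasDerivAt
  -- derivative of C at z ≠ 0
  have hCat : ∀ z ∈ Metric.ball (0:ℂ) r, z ≠ 0 →
      HasDerivAt C (c * (-(z^2)⁻¹) * f₁ z + c * z⁻¹ * deriv f₁ z) z := by
    intro z hz hz0
    rw [hCe]
    exact ((hasDerivAt_inv hz0).const_mul c).mul (hf₁at z hz)
  have hCd : ∀ z ∈ Metric.ball (0:ℂ) r, z ≠ 0 →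
      deriv C z = c * (-(z^2)⁻¹) * f₁ z + c * z⁻¹ * deriv f₁ z := fun z hz hz0 =>
    (hCat z hz hz0).deriv
  -- step 1: the determinant relation at the level of first derivatives
  obtain ⟨k, hk⟩ : ∃ k : ℕ, 2 * μ - 2 = k + 2 := ⟨2 * μ - 4, by omega⟩
  have hpow : ∀ z : ℂ, z ^ (2 * μ - 1) = z ^ (k + 2) * z := by
    intro z
    have : 2 * μ - 1 = (k + 2) + 1 := by omega
    rw [this, pow_succ]
  set W : ℂ → ℂ := fun z => f₂ z * g₁ z - b * c * (z ^ (k + 2) * (g₂ z * f₁ z)) with hW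
  have hW1 : ∀ z ∈ Metric.ball (0:ℂ) r, W z = 1 := by
    intro z hz
    rcases eq_or_ne z 0 with rfl | hz0
    · simp [hW, hf₂0, hg₁0]
    · have := hdet z hz hz0
      rw [hA, hB, hC, hD, hpow] at this
      field_simp at this
      refine mul_right_cancel₀ (b := z) hz0 ?_
      simp only [hW]
      linear_combination z * this
  have hWev : W =ᶠ[nhds (0:ℂ)] fun _ => (1:ℂ) :=
    Filter.eventuallyEq_of_mem (hob.mem_nhds h0r) hW1
  have hWat : HasDerivAt W
      ((deriv f₂ 0 * g₁ 0 + f₂ 0 * deriv g₁ 0) -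
        b * c * (((k+2 : ℕ) * (0:ℂ) ^ (k + 1)) * (g₂ 0 * f₁ 0) +
          (0:ℂ) ^ (k + 2) * (deriv g₂ 0 * f₁ 0 + g₂ 0 * deriv f₁ 0))) 0 := by
    exact ((hf₂at 0 h0r).mul (hg₁at 0 h0r)).sub
      ((((hasDerivAt_pow (k+2) 0)).mul ((hg₂at 0 h0r).mul (hf₁at 0 h0r))).const_mul (b * c))
  have hWd0 : deriv W 0 = 0 := by
    rw [hWev.deriv_eq]
    simp
  have hsum : deriv g₁ 0 = - deriv f₂ 0 := by
    have := hWat.deriv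
    rw [hWd0] at this
    have h1 : (0:ℂ) ^ (k+1) = 0 := zero_pow (Nat.succ_ne_zero k)
    have h2 : (0:ℂ) ^ (k+2) = 0 := zero_pow (by omega)
    rw [h1, h2, hf₂0, hg₁0] at this
    ring_nf at this ⊢
    linear_combination -this
  -- step 2: the value of deriv H 0
  set K : ℂ → ℂ := fun z =>
    c * (z * (f₂ z * deriv f₁ z) - f₂ z * f₁ z - z * (f₁ z * deriv f₂ z)) with hKdef
  have hHK : ∀ z ∈ Metric.ball (0:ℂ) r, z ≠ 0 → H z = K z := by
    intro z hz hz0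
    rw [hH z hz hz0, hCd z hz hz0, hAe]
    have hderivA : deriv A z = deriv f₂ z := by rw [hAe]
    rw [hCe]
    simp only [hKdef]
    field_simp
    ring
  have hKc : ContinuousAt K 0 := by
    have : DifferentiableAt ℂ K 0 := by
      apply DifferentiableAt.const_mul
      exact ((differentiableAt_id.mul ((hf₂.differentiableAt (hob.mem_nhds h0r)).mul
        (hf₁'.differentiableAt (hob.mem_nhds h0r)))).sub
        ((hf₂.differentiableAt (hob.mem_nhds h0r)).mul
          (hf₁.differentiableAt (hob.mem_nhds h0r)))).sub
        (differentiableAt_id.mul ((hf₁.differentiableAt (hob.mem_nhds h0r)).mul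
          (hf₂'.differentiableAt (hob.mem_nhds h0r))))
    exact this.continuousAt
  have hH0K0 : H 0 = K 0 := by
    have h1 : Filter.Tendsto H (nhdsWithin (0:ℂ) {(0:ℂ)}ᶜ) (nhds (H 0)) :=
      ((hHdiff.differentiableAt (hob.mem_nhds h0r)).continuousAt.tendsto).mono_left
        nhdsWithin_le_nhds
    have h2 : Filter.Tendsto K (nhdsWithin (0:ℂ) {(0:ℂ)}ᶜ) (nhds (K 0)) :=
      hKc.tendsto.mono_left nhdsWithin_le_nhds
    have hmem : Metric.ball (0:ℂ) r ∩ {(0:ℂ)}ᶜ ∈ nhdsWithin (0:ℂ) {(0:ℂ)}ᶜ :=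
      Filter.inter_mem (mem_nhdsWithin_of_mem_nhds (hob.mem_nhds h0r)) self_mem_nhdsWithin
    have h3 : H =ᶠ[nhdsWithin (0:ℂ) {(0:ℂ)}ᶜ] K :=
      Filter.eventuallyEq_of_mem hmem (fun z hz => hHK z hz.1 hz.2)
    exact tendsto_nhds_unique (h1.congr' h3) h2
  have hHKball : ∀ z ∈ Metric.ball (0:ℂ) r, H z = K z := by
    intro z hz
    rcases eq_or_ne z 0 with rfl | hz0
    · exact hH0K0
    · exact hHK z hz hz0
  have hHev : H =ᶠ[nhds (0:ℂ)] K :=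
    Filter.eventuallyEq_of_mem (hob.mem_nhds h0r) hHKball
  have hKat : HasDerivAt K
      (c * (((1 : ℂ) * (f₂ 0 * deriv f₁ 0) + 0 * deriv (fun z => f₂ z * deriv f₁ z) 0) -
        (deriv f₂ 0 * f₁ 0 + f₂ 0 * deriv f₁ 0) -
        ((1 : ℂ) * (f₁ 0 * deriv f₂ 0) + 0 * deriv (fun z => f₁ z * deriv f₂ z) 0))) 0 := by
    have d1 : DifferentiableAt ℂ (fun z => f₂ z * deriv f₁ z) 0 :=
      (hf₂.differentiableAt (hob.mem_nhds h0r)).mul (hf₁'.differentiableAt (hob.mem_nhds h0r))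
    have d2 : DifferentiableAt ℂ (fun z => f₁ z * deriv f₂ z) 0 :=
      (hf₁.differentiableAt (hob.mem_nhds h0r)).mul (hf₂'.differentiableAt (hob.mem_nhds h0r))
    exact ((((hasDerivAt_id (0:ℂ)).mul d1.hasDerivAt).sub
      ((hf₂at 0 h0r).mul (hf₁at 0 h0r))).sub
      ((hasDerivAt_id (0:ℂ)).mul d2.hasDerivAt)).const_mul c
  have hHd0 : deriv H 0 = -(2 * c * deriv f₂ 0) := by
    rw [hHev.deriv_eq, hKat.deriv, hf₁0, hf₂0]
    ring
  -- step 3: the circle integral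
  have hRr' : Metric.closedBall (0:ℂ) R ⊆ Metric.ball (0:ℂ) r := by
    intro z hz
    simp only [Metric.mem_closedBall, Metric.mem_ball] at hz ⊢
    linarith
  have hsub : Metric.sphere (0:ℂ) R ⊆ Metric.ball (0:ℂ) r := fun z hz =>
    hRr' (Metric.sphere_subset_closedBall hz)
  have hz0s : ∀ z ∈ Metric.sphere (0:ℂ) R, z ≠ 0 := by
    intro z hz
    simp only [Metric.mem_sphere, dist_zero_right] at hz
    intro h
    rw [h] at hz
    simp at hz
    linarith
  set ψ : ℂ → ℂ := fun z => -2 * c * (f₁ z * deriv g₁ z) with hψ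
  set q : ℂ → ℂ := fun z =>
    c * ((deriv g₁ z * f₁ z + g₁ z * deriv f₁ z) * z⁻¹ + g₁ z * f₁ z * (-(z^2)⁻¹)) with hq
  set P : ℂ → ℂ := fun z => c * (g₁ z * f₁ z * z⁻¹) with hP
  have hPat : ∀ z ∈ Metric.sphere (0:ℂ) R, HasDerivAt P (q z) z := by
    intro z hz
    exact (((hg₁at z (hsub hz)).mul (hf₁at z (hsub hz))).mul
      (hasDerivAt_inv (hz0s z hz))).const_mul c
  have hsplit : Set.EqOn (fun z => D z * deriv C z - C z * deriv D z)
      (fun z => (z - 0)⁻¹ • ψ z - (- q z)) (Metric.sphere 0 R) := by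
    intro z hz
    have hz0 := hz0s z hz
    have hzr := hsub hz
    have hderivD : deriv D z = deriv g₁ z := by rw [hDe]
    simp only [hCd z hzr hz0, hderivD, hD, hC, hq, hψ, smul_eq_mul, sub_zero]
    field_simp
    ring
  rw [circleIntegral.integral_congr hR.le hsplit]
  -- integrability
  have hcontψ : ContinuousOn (fun z => (z - 0)⁻¹ • ψ z) (Metric.sphere (0:ℂ) R) := by
    apply ContinuousOn.fun_smul
    · exact ((continuousOn_id.sub continuousOn_const).inv₀ (by
        intro z hz; simpa using hz0s z hz))
    · rw [hψ]
      exact continuousOn_const.mul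
        ((hf₁.continuousOn.mono hsub).mul (hg₁'.continuousOn.mono hsub))
  have hcontq : ContinuousOn (fun z => - q z) (Metric.sphere (0:ℂ) R) := by
    apply ContinuousOn.neg
    apply ContinuousOn.mul continuousOn_const
    apply ContinuousOn.add
    · exact (((hg₁'.continuousOn.mono hsub).mul (hf₁.continuousOn.mono hsub)).add
        ((hg₁.continuousOn.mono hsub).mul (hf₁'.continuousOn.mono hsub))).mul
        (continuousOn_id.inv₀ (hz0s))
    · exact ((hg₁.continuousOn.mono hsub).mul (hf₁.continuousOn.mono hsub)).mul
        (((continuousOn_id.pow 2).inv₀ (fun z hz => pow_ne_zero 2 (hz0s z hz))).neg)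
  rw [circleIntegral.integral_sub (hcontψ.circleIntegrable hR.le)
    (hcontq.circleIntegrable hR.le)]
  have hqzero : (∮ z in C(0, R), - q z) = 0 := by
    apply circleIntegral.integral_eq_zero_of_hasDerivWithinAt hR.le (f := fun z => - P z)
    intro z hz
    exact ((hPat z hz).neg).hasDerivWithinAt
  have hψint : (∮ z in C(0, R), (z - 0)⁻¹ • ψ z) = (2 * Real.pi * Complex.I : ℂ) • ψ 0 := by
    apply DifferentiableOn.circleIntegral_sub_inv_smul _ (by simpa using hR)
    apply DifferentiableOn.mono _ hRr'
    exact ((hf₁.mul hg₁').const_mul _)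
  rw [hqzero, hψint, hψ]
  simp only [smul_eq_mul, hf₁0, sub_zero, hHd0, hsum]
  ring
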